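/- Let X, Z be indecomposable complexes in C_{η+2}(proj Λ) and let δ: X → Y → Z be an almost split sequence in C_{η+2}(proj Λ). If X^1 = 0, Y^1 = 0 and Z^1 = 0, then *[δ]: *[X] → *[Y] → *[Z] is an almost split sequence in C_{η+1}(proj Λ). -/

import Mathlib

open CategoryTheory CategoryTheory.Limits ZeroObject

noncomputable section

namespace Paper

/-- The ambient category: cochain complexes of right `Λ`-modules indexed by `ℤ`. -/
abbrev Amb (Λ : Type) [Ring Λ] := CochainComplex (ModuleCat.{0} Λᵐᵒᵖ) ℤ

variable {Λ : Type} [Ring Λ]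

/-- All cells are finitely generated projective right `Λ`-modules. -/
def ProjCells (X : Amb Λ) : Prop :=
  ∀ i : ℤ, Module.Finite Λᵐᵒᵖ (X.X i) ∧ Module.Projective Λᵐᵒᵖ (X.X i)

/-- The complex is supported in the window `[a, b]`. -/
def Supp (a b : ℤ) (X : Amb Λ) : Prop :=
  ∀ i : ℤ, (i < a ∨ b < i) → IsZero (X.X i)

/-- Object of the category `C_{[a,b]}(proj Λ)` of complexes of finitely generated
projective modules concentrated in the window `[a, b]`.  (The category
`C_n(proj Λ)` of the paper corresponds to the window `[1, n]`; a window `[a, b]`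
corresponds to `C_{b-a+1}(proj Λ)` after the canonical reindexing.) -/
def InC (a b : ℤ) (X : Amb Λ) : Prop := Supp a b X ∧ ProjCells X

def IsSect {X Y : Amb Λ} (f : X ⟶ Y) : Prop := ∃ h : Y ⟶ X, f ≫ h = 𝟙 X

def IsRetr {X Y : Amb Λ} (f : X ⟶ Y) : Prop := ∃ h : Y ⟶ X, h ≫ f = 𝟙 Y

/-- `f` is irreducible in `C_{[a,b]}(proj Λ)`. -/
def Irred (a b : ℤ) {X Y : Amb Λ} (f : X ⟶ Y) : Prop :=
  ¬ IsSect f ∧ ¬ IsRetr f ∧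
    ∀ (W : Amb Λ), InC a b W → ∀ (g : X ⟶ W) (h : W ⟶ Y),
      g ≫ h = f → IsRetr h ∨ IsSect g

/-- Indecomposable complex. -/
def Indec (X : Amb Λ) : Prop :=
  ¬ IsZero X ∧ ∀ (A B : Amb Λ), (X ≅ A ⊞ B) → IsZero A ∨ IsZero B

/-- A conflation: in every degree a split short exact sequence. -/
def DegSplit {X Y Z : Amb Λ} (f : X ⟶ Y) (g : Y ⟶ Z) : Prop :=
  ∀ j : ℤ, ∃ w : f.f j ≫ g.f j = 0,
    Nonempty (ShortComplex.mk (f.f j) (g.f j) w).Splitting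

/-- Minimal left almost split morphism in `C_{[a,b]}(proj Λ)`. -/
def MinLeftAS (a b : ℤ) {X Y : Amb Λ} (f : X ⟶ Y) : Prop :=
  ¬ IsSect f ∧
    (∀ (W : Amb Λ), InC a b W → ∀ u : X ⟶ W, ¬ IsSect u → ∃ v : Y ⟶ W, f ≫ v = u) ∧
    (∀ u : Y ⟶ Y, f ≫ u = f → IsIso u)

/-- Minimal right almost split morphism in `C_{[a,b]}(proj Λ)`. -/
def MinRightAS (a b : ℤ) {Y Z : Amb Λ} (g : Y ⟶ Z) : Prop :=
  ¬ IsRetr g ∧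
    (∀ (W : Amb Λ), InC a b W → ∀ u : W ⟶ Z, ¬ IsRetr u → ∃ v : W ⟶ Y, v ≫ g = u) ∧
    (∀ u : Y ⟶ Y, u ≫ g = g → IsIso u)

/-- Almost split sequence in `C_{[a,b]}(proj Λ)`. -/
def AlmostSplit (a b : ℤ) {X Y Z : Amb Λ} (f : X ⟶ Y) (g : Y ⟶ Z) : Prop :=
  DegSplit f g ∧ MinLeftAS a b f ∧ MinRightAS a b g

/-- `X` (supported in a window starting at `a`) can be extended to the left. -/
def ExtLeft (a : ℤ) (X : Amb Λ) : Prop :=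
  ∃ P : ModuleCat.{0} Λᵐᵒᵖ, Module.Finite Λᵐᵒᵖ P ∧ Module.Projective Λᵐᵒᵖ P ∧
    ∃ δ : P ⟶ X.X a, δ ≠ 0 ∧ δ ≫ X.d a (a + 1) = 0

/-- `X` (supported in a window ending at `b`) can be extended to the right. -/
def ExtRight (b : ℤ) (X : Amb Λ) : Prop :=
  ∃ P : ModuleCat.{0} Λᵐᵒᵖ, Module.Finite Λᵐᵒᵖ P ∧ Module.Projective Λᵐᵒᵖ P ∧
    ∃ δ : X.X b ⟶ P, δ ≠ 0 ∧ X.d (b - 1) b ≫ δ = 0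

/-- Bounded complex. -/
def BddCplx (X : Amb Λ) : Prop := ∃ a b : ℤ, Supp a b X

/-- Contractible complex, i.e. zero in the homotopy category. -/
def Contractible (X : Amb Λ) : Prop := Nonempty (Homotopy (𝟙 X) 0)

/-- Indecomposable nonzero object of `K^b(proj Λ)`. -/
def HIndec (X : Amb Λ) : Prop :=
  ¬ Contractible X ∧
    ∀ (A B : Amb Λ), ProjCells A → BddCplx A → ProjCells B → BddCplx B →
      Nonempty (HomotopyEquiv X (A ⊞ B)) → Contractible A ∨ Contractible B

/-- The candidate lengths of `X` as an object of `K^b(proj Λ)`. -/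
def lenSet (X : Amb Λ) : Set ℕ :=
  {d | ∃ (Y : Amb Λ) (r s : ℤ), r ≤ s ∧ Nonempty (HomotopyEquiv X Y) ∧
        ProjCells Y ∧ Supp r s Y ∧ d = (s - r).toNat}

/-- `ℓ(X)`. -/
def len (X : Amb Λ) : ℕ := sInf (lenSet X)

/-- `η` is the strong global dimension of `Λ`. -/
def IsSGdim (Λ : Type) [Ring Λ] (η : ℕ) : Prop :=
  IsGreatest {d : ℕ | ∃ X : Amb Λ, ProjCells X ∧ BddCplx X ∧ HIndec X ∧ len X = d} η

/-- Brutal truncation of a complex to the set of degrees satisfying `P`. -/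
def chop (P : ℤ → Prop) [DecidablePred P] (X : Amb Λ) : Amb Λ where
  X i := if P i then X.X i else 0
  d i j :=
    if hi : P i then
      if hj : P j then
        eqToHom (if_pos hi) ≫ X.d i j ≫ eqToHom (if_pos hj).symm
      else 0
    else 0
  shape i j h := by
    by_cases hi : P i
    · by_cases hj : P j
      · simp [hi, hj, X.shape i j h]
      · simp [hi, hj]
    · simp [hi]
  d_comp_d' i j k hij hjk := by
    by_cases hi : P i <;> by_cases hj : P j <;> by_cases hk : P k <;>
      simp [hi, hj, hk]

/-- Brutal truncation of a chain map. -/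
def chopMap (P : ℤ → Prop) [DecidablePred P] {X Y : Amb Λ} (f : X ⟶ Y) :
    chop P X ⟶ chop P Y where
  f i :=
    if h : P i then eqToHom (if_pos h) ≫ f.f i ≫ eqToHom (if_pos h).symm
    else 0
  comm' i j hij := by
    by_cases hi : P i <;> by_cases hj : P j <;>
      simp [chop, hi, hj] <;> erw [Limits.zero_comp] <;> erw [Limits.comp_zero]

/-- `E_{[a,b]}`-projective complex (lifting against proper epimorphisms). -/
def EProj (a b : ℤ) (P : Amb Λ) : Prop :=
  ∀ (W₁ W₂ : Amb Λ), InC a b W₁ → InC a b W₂ → ∀ v : W₁ ⟶ W₂,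
    (∀ j : ℤ, Epi (v.f j)) → ∀ f : P ⟶ W₂, ∃ g : P ⟶ W₁, g ≫ v = f

/-- `E_{[a,b]}`-injective complex (extending along proper monomorphisms). -/
def EInj (a b : ℤ) (I : Amb Λ) : Prop :=
  ∀ (W₁ W₂ : Amb Λ), InC a b W₁ → InC a b W₂ → ∀ v : W₁ ⟶ W₂,
    (∀ j : ℤ, Mono (v.f j)) → ∀ f : W₁ ⟶ I, ∃ g : W₂ ⟶ I, v ≫ g = f

section Transport

variable {Λ : Type} [Ring Λ]

lemma chop_isZero (P : ℤ → Prop) [DecidablePred P] (X : Amb Λ) {i : ℤ} (h : ¬ P i) :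
    IsZero ((chop P X).X i) :=
  IsZero.of_iso (isZero_zero _) (eqToIso (if_neg h))

/-- The inclusion-type isomorphism `chop P X ≅ X` when all cells outside `P` vanish. -/
def chopIso (P : ℤ → Prop) [DecidablePred P] (X : Amb Λ)
    (hX : ∀ i, ¬ P i → IsZero (X.X i)) : chop P X ≅ X :=
  HomologicalComplex.Hom.isoOfComponents
    (fun i => if h : P i then eqToIso (if_pos h) else (chop_isZero P X h).iso (hX i h))
    (fun i j _ => by
      by_cases hi : P i
      · by_cases hj : P j
        · simp [chop, hi, hj]
        · exact (hX j hj).eq_of_tgt _ _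
      · exact (chop_isZero P X hi).eq_of_src _ _)

lemma chopMap_eq (P : ℤ → Prop) [DecidablePred P] {X Y : Amb Λ} (f : X ⟶ Y)
    (hX : ∀ i, ¬ P i → IsZero (X.X i)) (hY : ∀ i, ¬ P i → IsZero (Y.X i)) :
    chopMap P f = (chopIso P X hX).hom ≫ f ≫ (chopIso P Y hY).inv := by
  refine HomologicalComplex.hom_ext _ _ fun i => ?_
  by_cases hi : P i
  · simp [chopMap, chopIso, hi]
    rfl
  · exact (chop_isZero P X hi).eq_of_src _ _

lemma chopMap_f_pos (P : ℤ → Prop) [DecidablePred P] {X Y : Amb Λ} (f : X ⟶ Y)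
    {j : ℤ} (h : P j) :
    (chopMap P f).f j = eqToHom (if_pos h) ≫ f.f j ≫ eqToHom (if_pos h).symm :=
  dif_pos h

lemma chopMap_f_neg (P : ℤ → Prop) [DecidablePred P] {X Y : Amb Λ} (f : X ⟶ Y)
    {j : ℤ} (h : ¬ P j) : (chopMap P f).f j = 0 :=
  dif_neg h

lemma isSect_conj {A B X Y : Amb Λ} (e₁ : A ≅ X) (e₂ : B ≅ Y) (f : X ⟶ Y) :
    IsSect (e₁.hom ≫ f ≫ e₂.inv) → IsSect f := by
  rintro ⟨h, hh⟩
  refine ⟨e₂.inv ≫ h ≫ e₁.hom, ?_⟩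
  have h2 := congrArg (fun t => e₁.inv ≫ t ≫ e₁.hom) hh
  simpa using h2

lemma isSect_conj' {A B X Y : Amb Λ} (e₁ : A ≅ X) (e₂ : B ≅ Y) (f : X ⟶ Y) :
    IsSect f → IsSect (e₁.hom ≫ f ≫ e₂.inv) := by
  rintro ⟨h, hh⟩
  refine ⟨e₂.hom ≫ h ≫ e₁.inv, ?_⟩
  have h2 := congrArg (fun t => e₁.hom ≫ t ≫ e₁.inv) hh
  simpa using h2

lemma isRetr_conj {A B X Y : Amb Λ} (e₁ : A ≅ X) (e₂ : B ≅ Y) (f : X ⟶ Y) :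
    IsRetr (e₁.hom ≫ f ≫ e₂.inv) → IsRetr f := by
  rintro ⟨h, hh⟩
  refine ⟨e₂.inv ≫ h ≫ e₁.hom, ?_⟩
  have h2 := congrArg (fun t => e₂.inv ≫ t ≫ e₂.hom) hh
  simpa using h2

lemma isSect_comp_isoinv {X W A : Amb Λ} (e₁ : A ≅ X) (u : A ⟶ W) :
    IsSect (e₁.inv ≫ u) → IsSect u := by
  rintro ⟨h, hh⟩
  refine ⟨h ≫ e₁.inv, ?_⟩
  have h2 := congrArg (fun t => e₁.hom ≫ t ≫ e₁.inv) hh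
  simpa using h2

lemma isRetr_comp_isohom {Z W A : Amb Λ} (e₁ : A ≅ Z) (u : W ⟶ A) :
    IsRetr (u ≫ e₁.hom) → IsRetr u := by
  rintro ⟨h, hh⟩
  refine ⟨e₁.hom ≫ h, ?_⟩
  have h2 := congrArg (fun t => e₁.hom ≫ t ≫ e₁.inv) hh
  simpa using h2

def splitting_conj {C : Type*} [CategoryTheory.Category C] [Preadditive C]
    {X₁ X₂ X₃ Y₁ Y₂ Y₃ : C} (p₁ : Y₁ = X₁) (p₂ : Y₂ = X₂) (p₃ : Y₃ = X₃)
    {f : X₁ ⟶ X₂} {g : X₂ ⟶ X₃} {w : f ≫ g = 0}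
    (sp : (ShortComplex.mk f g w).Splitting)
    (w' : (eqToHom p₁ ≫ f ≫ eqToHom p₂.symm) ≫ (eqToHom p₂ ≫ g ≫ eqToHom p₃.symm) = 0) :
    (ShortComplex.mk (eqToHom p₁ ≫ f ≫ eqToHom p₂.symm)
      (eqToHom p₂ ≫ g ≫ eqToHom p₃.symm) w').Splitting := by
  subst p₁; subst p₂; subst p₃
  exact
    { r := sp.r
      s := sp.s
      f_r := by simpa using sp.f_r
      s_g := by simpa using sp.s_g
      id := by simpa using sp.id }

lemma inC_mono {b : ℤ} {W : Amb Λ} (h : InC 2 b W) : InC 1 b W := by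
  refine ⟨fun i hi => h.1 i ?_, h.2⟩
  rcases hi with hi | hi
  · exact Or.inl (by omega)
  · exact Or.inr hi

end Transport

theorem statement7 (K : Type) [Field K] [IsAlgClosed K]
    (Λ : Type) [Ring Λ] [Algebra K Λ] [FiniteDimensional K Λ]
    (η : ℕ) (hη : 1 ≤ η) (hsgd : IsSGdim Λ η)
    (X Y Z : Amb Λ) (hX : InC 1 ((η : ℤ) + 2) X) (hY : InC 1 ((η : ℤ) + 2) Y)
    (hZ : InC 1 ((η : ℤ) + 2) Z) (hIX : Indec X) (hIZ : Indec Z)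
    (f : X ⟶ Y) (g : Y ⟶ Z) (hδ : AlmostSplit 1 ((η : ℤ) + 2) f g)
    (h1 : IsZero (X.X 1)) (h2 : IsZero (Y.X 1)) (h3 : IsZero (Z.X 1)) :
    AlmostSplit 2 ((η : ℤ) + 2)
      (chopMap (fun i => 2 ≤ i) f) (chopMap (fun i => 2 ≤ i) g) := by
  have zcell : ∀ (W : Amb Λ), InC 1 ((η : ℤ) + 2) W → IsZero (W.X 1) →
      ∀ i, ¬ ((2:ℤ) ≤ i) → IsZero (W.X i) := by
    intro W hW hW1 i hi
    rcases eq_or_ne i 1 with h | h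
    · subst h; exact hW1
    · exact hW.1 i (Or.inl (by omega))
  have hXz := zcell X hX h1
  have hYz := zcell Y hY h2
  have hZz := zcell Z hZ h3
  set eX := chopIso (fun i => 2 ≤ i) X hXz with heX
  set eY := chopIso (fun i => 2 ≤ i) Y hYz with heY
  set eZ := chopIso (fun i => 2 ≤ i) Z hZz with heZ
  have hf : chopMap (fun i => 2 ≤ i) f = eX.hom ≫ f ≫ eY.inv :=
    chopMap_eq _ f hXz hYz
  have hg : chopMap (fun i => 2 ≤ i) g = eY.hom ≫ g ≫ eZ.inv :=
    chopMap_eq _ g hYz hZz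
  obtain ⟨hDS, hML, hMR⟩ := hδ
  refine ⟨?_, ⟨?_, ?_, ?_⟩, ⟨?_, ?_, ?_⟩⟩
  · -- DegSplit
    intro j
    by_cases hj : (2:ℤ) ≤ j
    · obtain ⟨w, ⟨sp⟩⟩ := hDS j
      have e1 := chopMap_f_pos (fun i => 2 ≤ i) f (j := j) hj
      have e2 := chopMap_f_pos (fun i => 2 ≤ i) g (j := j) hj
      have w' : (chopMap (fun i => 2 ≤ i) f).f j ≫ (chopMap (fun i => 2 ≤ i) g).f j = 0 := by
        rw [e1, e2]
        have qX : (chop (fun i => 2 ≤ i) X).X j = X.X j := if_pos hj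
        have qY : (chop (fun i => 2 ≤ i) Y).X j = Y.X j := if_pos hj
        have qZ : (chop (fun i => 2 ≤ i) Z).X j = Z.X j := if_pos hj
        exact (show (eqToHom qX ≫ f.f j ≫ eqToHom qY.symm) ≫
            (eqToHom qY ≫ g.f j ≫ eqToHom qZ.symm) = 0 by simp [reassoc_of% w])
      have pX : (chop (fun i => 2 ≤ i) X).X j = X.X j := if_pos hj
      have pY : (chop (fun i => 2 ≤ i) Y).X j = Y.X j := if_pos hj
      have pZ : (chop (fun i => 2 ≤ i) Z).X j = Z.X j := if_pos hj
      have w2 : (eqToHom pX ≫ f.f j ≫ eqToHom pY.symm) ≫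
          (eqToHom pY ≫ g.f j ≫ eqToHom pZ.symm) = 0 := by
        simp [reassoc_of% w]
      refine ⟨w', ⟨?_⟩⟩
      have hSC : ShortComplex.mk ((chopMap (fun i => 2 ≤ i) f).f j)
          ((chopMap (fun i => 2 ≤ i) g).f j) w' =
          ShortComplex.mk (eqToHom pX ≫ f.f j ≫ eqToHom pY.symm)
            (eqToHom pY ≫ g.f j ≫ eqToHom pZ.symm) w2 := by
        congr 1
      rw [hSC]
      exact splitting_conj pX pY pZ sp w2
    · have z1 := chop_isZero (fun i => 2 ≤ i) X (i := j) hj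
      have z2 := chop_isZero (fun i => 2 ≤ i) Y (i := j) hj
      have z3 := chop_isZero (fun i => 2 ≤ i) Z (i := j) hj
      exact ⟨z1.eq_of_src _ _, ⟨{
        r := 0
        s := 0
        f_r := z1.eq_of_tgt _ _
        s_g := z3.eq_of_src _ _
        id := z2.eq_of_src _ _ }⟩⟩
  · intro hs
    exact hML.1 (isSect_conj eX eY f (hf ▸ hs))
  · intro W hW u hu
    have hu' : ¬ IsSect (eX.inv ≫ u) := fun hs => hu (isSect_comp_isoinv eX u hs)
    obtain ⟨v, hv⟩ := hML.2.1 W (inC_mono hW) (eX.inv ≫ u) hu'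
    refine ⟨eY.hom ≫ v, ?_⟩
    rw [hf]
    simp [hv, reassoc_of% hv]
  · intro u hu
    have h0 : f ≫ (eY.inv ≫ u ≫ eY.hom) = f := by
      have h2 := congrArg (fun t => eX.inv ≫ t ≫ eY.hom) hu
      rw [hf] at h2
      simpa using h2
    have hiso := hML.2.2 _ h0
    have hu2 : u = eY.hom ≫ (eY.inv ≫ u ≫ eY.hom) ≫ eY.inv := by simp
    rw [hu2]
    infer_instance
  · intro hr
    exact hMR.1 (isRetr_conj eY eZ g (hg ▸ hr))
  · intro W hW u hu
    have hu' : ¬ IsRetr (u ≫ eZ.hom) := fun hr => hu (isRetr_comp_isohom eZ u hr)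
    obtain ⟨v, hv⟩ := hMR.2.1 W (inC_mono hW) (u ≫ eZ.hom) hu'
    refine ⟨v ≫ eY.inv, ?_⟩
    rw [hg]
    have h2 := congrArg (fun t => t ≫ eZ.inv) hv
    simpa using h2
  · intro u hu
    have h0 : (eY.inv ≫ u ≫ eY.hom) ≫ g = g := by
      have h2 := congrArg (fun t => eY.inv ≫ t ≫ eZ.hom) hu
      rw [hg] at h2
      simpa using h2
    have hiso := hMR.2.2 _ h0
    have hu2 : u = eY.hom ≫ (eY.inv ≫ u ≫ eY.hom) ≫ eY.inv := by simp
    rw [hu2]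
    infer_instance


end Paper
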